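/- Suppose each ∇Q_i is μ-Lipschitz (Assumption 1), for every S ⊆ {1,…,n} with |S| ≥ n−r the average Q_S is γ-strongly convex (Assumption 2), the cost functions satisfy (0,r;ε)-redundancy, and α := 1 − (r/n)·(μ/γ) > 0. Then for every x ∈ ℝ^d and every S ⊆ {1,…,n} with |S| = n−r, ⟨x − x*, Σ_{j∈S} ∇Q_j(x)⟩ ≥ α·n·γ·‖x − x*‖·(‖x − x*‖ − 2rμε/(αγ)), where x* is the unique minimizer of Σ_{i∈[n]} Q_i. -/

import Mathlib

open Finset
open scoped RealInnerProductSpace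

lemma grad_sum' {F : Type*} [NormedAddCommGroup F] [InnerProductSpace ℝ F] [CompleteSpace F]
    {ι : Type*} (S : Finset ι) (Q : ι → F → ℝ) (x : F)
    (hdiff : ∀ i ∈ S, DifferentiableAt ℝ (Q i) x) :
    gradient (fun y => ∑ i ∈ S, Q i y) x = ∑ i ∈ S, gradient (Q i) x := by
  unfold gradient
  rw [fderiv_fun_sum hdiff, map_sum]

lemma grad_min_zero' {F : Type*} [NormedAddCommGroup F] [InnerProductSpace ℝ F] [CompleteSpace F]
    (g : F → ℝ) (w : F) (h : ∀ z, g w ≤ g z) : gradient g w = 0 := by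
  have hloc : IsLocalMin g w := Filter.Eventually.of_forall fun z => h z
  unfold gradient
  rw [hloc.fderiv_eq_zero, map_zero]

set_option maxHeartbeats 1000000 in
/-- lower bound on ⟨x − x*, Σ_{j∈S} ∇Q_j(x)⟩ for any set S of n−r agents,
under Assumptions 1–2 and (0,r;ε)-redundancy. -/
theorem stmt7 {d n r : ℕ} (hd : 1 ≤ d) (hrn : r < n)
    (Q : Fin n → EuclideanSpace ℝ (Fin d) → ℝ) (μ γ ε : ℝ) (hγ : 0 < γ)
    (hdiff : ∀ i x, DifferentiableAt ℝ (Q i) x)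
    -- Assumption 1: each ∇Q_i is μ-Lipschitz
    (hlip : ∀ i x y,
      ‖gradient (Q i) x - gradient (Q i) y‖ ≤ μ * ‖x - y‖)
    -- Assumption 2: averages over sets of ≥ n−r agents are γ-strongly convex
    (hsc : ∀ S : Finset (Fin n), n ≤ S.card + r →
      ∀ x y : EuclideanSpace ℝ (Fin d),
        γ * ‖x - y‖ ^ 2 ≤
          ⟪(S.card : ℝ)⁻¹ •
              (∑ j ∈ S, gradient (Q j) x - ∑ j ∈ S, gradient (Q j) y), x - y⟫)
    -- (0,r;ε)-redundancy
    (hred : ∀ Shat : Finset (Fin n), n ≤ Shat.card + r →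
      ({y : EuclideanSpace ℝ (Fin d) |
          ∀ z, ∑ i ∈ Shat, Q i y ≤ ∑ i ∈ Shat, Q i z}.Nonempty ∧
        Metric.hausdorffDist
          {y : EuclideanSpace ℝ (Fin d) | ∀ z, ∑ i ∈ Shat, Q i y ≤ ∑ i ∈ Shat, Q i z}
          {y : EuclideanSpace ℝ (Fin d) | ∀ z, ∑ i, Q i y ≤ ∑ i, Q i z} ≤ ε))
    -- x* is the (unique) minimizer of the total cost
    (xstar : EuclideanSpace ℝ (Fin d))
    (hxmin : ∀ z, ∑ i, Q i xstar ≤ ∑ i, Q i z)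
    (α : ℝ) (hα : α = 1 - (r : ℝ) / n * (μ / γ)) (hαpos : 0 < α) :
    ∀ x : EuclideanSpace ℝ (Fin d), ∀ S : Finset (Fin n), S.card + r = n →
      α * n * γ * ‖x - xstar‖ * (‖x - xstar‖ - 2 * r * μ * ε / (α * γ)) ≤
        ⟪x - xstar, ∑ j ∈ S, gradient (Q j) x⟫ := by
  intro x S hS
  have hnpos : 0 < n := by omega
  have hn0 : (0:ℝ) < n := by exact_mod_cast hnpos
  have hγ0 : γ ≠ 0 := ne_of_gt hγ
  have hα0 : α ≠ 0 := ne_of_gt hαpos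
  -- μ ≥ 0
  have hμ0 : 0 ≤ μ := by
    have i0 : Fin d := ⟨0, hd⟩
    have hne : ‖(EuclideanSpace.single i0 (1:ℝ)) - (0 : EuclideanSpace ℝ (Fin d))‖ = 1 := by
      simp
    have h := hlip ⟨0, hnpos⟩ (EuclideanSpace.single i0 (1:ℝ)) 0
    rw [hne, mul_one] at h
    exact le_trans (norm_nonneg _) h
  -- ε ≥ 0
  have hε0 : 0 ≤ ε := by
    have h := (hred univ (by simp)).2
    exact le_trans Metric.hausdorffDist_nonneg h
  -- total gradient vanishes at xstar
  have gz : ∑ i, gradient (Q i) xstar = 0 := by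
    rw [← grad_sum' univ Q xstar (fun i _ => hdiff i xstar)]
    exact grad_min_zero' _ _ hxmin
  -- full argmin set is {xstar}
  have hfull : {y : EuclideanSpace ℝ (Fin d) | ∀ z, ∑ i, Q i y ≤ ∑ i, Q i z}
      = {xstar} := by
    apply Set.eq_singleton_iff_unique_mem.mpr
    refine ⟨hxmin, fun y hy => ?_⟩
    have gy : ∑ i, gradient (Q i) y = 0 := by
      rw [← grad_sum' univ Q y (fun i _ => hdiff i y)]
      exact grad_min_zero' _ _ hy
    have h := hsc univ (by simp) y xstar
    rw [gy, gz, sub_zero, smul_zero, inner_zero_left] at h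
    rw [← mul_zero γ] at h
    have hsq : ‖y - xstar‖ ^ 2 ≤ 0 := le_of_mul_le_mul_left h hγ
    have hn : ‖y - xstar‖ = 0 :=
      pow_eq_zero_iff two_ne_zero |>.mp (le_antisymm hsq (sq_nonneg _))
    rw [norm_eq_zero, sub_eq_zero] at hn
    exact hn
  -- key: each qualifying subset has a minimizer with zero gradient-sum, within ε of xstar
  have key : ∀ T : Finset (Fin n), n ≤ T.card + r →
      ∃ w, (∑ j ∈ T, gradient (Q j) w = 0) ∧ ‖w - xstar‖ ≤ ε := by
    intro T hT
    obtain ⟨⟨w, hw⟩, hdist⟩ := hred T hT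
    have gw : ∑ j ∈ T, gradient (Q j) w = 0 := by
      rw [← grad_sum' T Q w (fun i _ => hdiff i w)]
      exact grad_min_zero' _ _ hw
    refine ⟨w, gw, ?_⟩
    have hTset : {y : EuclideanSpace ℝ (Fin d) | ∀ z, ∑ i ∈ T, Q i y ≤ ∑ i ∈ T, Q i z}
        = {w} := by
      apply Set.eq_singleton_iff_unique_mem.mpr
      refine ⟨hw, fun y hy => ?_⟩
      have gy : ∑ j ∈ T, gradient (Q j) y = 0 := by
        rw [← grad_sum' T Q y (fun i _ => hdiff i y)]
        exact grad_min_zero' _ _ hy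
      have h := hsc T hT y w
      rw [gy, gw, sub_zero, smul_zero, inner_zero_left] at h
      rw [← mul_zero γ] at h
      have hsq : ‖y - w‖ ^ 2 ≤ 0 := le_of_mul_le_mul_left h hγ
      have hn : ‖y - w‖ = 0 :=
        pow_eq_zero_iff two_ne_zero |>.mp (le_antisymm hsq (sq_nonneg _))
      rw [norm_eq_zero, sub_eq_zero] at hn
      exact hn
    rw [hTset, hfull] at hdist
    have hfin : EMetric.hausdorffEdist ({w} : Set (EuclideanSpace ℝ (Fin d))) {xstar} ≠ ⊤ :=
      Metric.hausdorffEdist_ne_top_of_nonempty_of_bounded (Set.singleton_nonempty w)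
        (Set.singleton_nonempty xstar) Bornology.isBounded_singleton
        Bornology.isBounded_singleton
    have hle := Metric.infDist_le_hausdorffDist_of_mem (Set.mem_singleton w) hfin
    rw [Metric.infDist_singleton] at hle
    rw [← dist_eq_norm]
    exact le_trans hle hdist
  -- minimizer of S
  obtain ⟨xS, hxSg, hxSd⟩ := key S (le_of_eq hS.symm)
  -- term 1: strong convexity over the full set
  have hT1 : (n:ℝ) * γ * ‖x - xstar‖ ^ 2 ≤ ⟪x - xstar, ∑ i, gradient (Q i) x⟫ := by
    have h := hsc univ (by simp) x xstar
    rw [card_univ, Fintype.card_fin, gz, sub_zero, real_inner_smul_left] at h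
    rw [real_inner_comm]
    have h2 : (n:ℝ) * (γ * ‖x - xstar‖ ^ 2) ≤
        (n:ℝ) * ((↑n)⁻¹ * ⟪∑ j ∈ univ, gradient (Q j) x, x - xstar⟫) :=
      mul_le_mul_of_nonneg_left h (le_of_lt hn0)
    rw [← mul_assoc, ← mul_assoc, mul_inv_cancel₀ (ne_of_gt hn0), one_mul] at h2
    linarith
  -- per-agent bound outside S
  have hbound : ∀ i ∈ Sᶜ, ‖gradient (Q i) x‖ ≤ μ * ‖x - xstar‖ + 2 * n * μ * ε := by
    intro i hi
    have hiS : i ∉ S := Finset.mem_compl.mp hi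
    have hr1 : 1 ≤ r := by
      rcases Nat.eq_zero_or_pos r with h0 | h
      · exfalso
        rw [h0, add_zero] at hS
        have hSu : S = univ := Finset.eq_univ_of_card S (by rw [hS, Fintype.card_fin])
        exact hiS (hSu ▸ mem_univ i)
      · exact h
    have hr1' : (1:ℝ) ≤ r := by exact_mod_cast hr1
    obtain ⟨xT, hxTg, hxTd⟩ := key (insert i S)
      (by rw [Finset.card_insert_of_notMem hiS]; omega)
    rw [Finset.sum_insert hiS] at hxTg
    have hTS : ‖xT - xS‖ ≤ 2 * ε := by
      have h1 := norm_sub_le_norm_sub_add_norm_sub xT xstar xS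
      have h2 : ‖xstar - xS‖ = ‖xS - xstar‖ := norm_sub_rev _ _
      linarith
    have hgi : gradient (Q i) xT
        = -(∑ j ∈ S, gradient (Q j) xT - ∑ j ∈ S, gradient (Q j) xS) := by
      rw [hxSg, sub_zero, eq_neg_iff_add_eq_zero]
      exact hxTg
    have hgiT : ‖gradient (Q i) xT‖ ≤ (S.card : ℝ) * (μ * (2 * ε)) := by
      rw [hgi, norm_neg, ← Finset.sum_sub_distrib]
      calc ‖∑ j ∈ S, (gradient (Q j) xT - gradient (Q j) xS)‖
          ≤ ∑ j ∈ S, ‖gradient (Q j) xT - gradient (Q j) xS‖ := norm_sum_le _ _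
        _ ≤ ∑ _j ∈ S, μ * (2 * ε) :=
            Finset.sum_le_sum fun j _ => le_trans (hlip j xT xS) (by nlinarith)
        _ = (S.card : ℝ) * (μ * (2 * ε)) := by rw [Finset.sum_const, nsmul_eq_mul]
    have hxxT : ‖x - xT‖ ≤ ‖x - xstar‖ + ε := by
      have h1 := norm_sub_le_norm_sub_add_norm_sub x xstar xT
      have h2 : ‖xstar - xT‖ = ‖xT - xstar‖ := norm_sub_rev _ _
      linarith
    have hcard : (S.card : ℝ) + r = n := by exact_mod_cast hS
    calc ‖gradient (Q i) x‖
        = ‖(gradient (Q i) x - gradient (Q i) xT) + gradient (Q i) xT‖ := by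
          rw [sub_add_cancel]
      _ ≤ ‖gradient (Q i) x - gradient (Q i) xT‖ + ‖gradient (Q i) xT‖ := norm_add_le _ _
      _ ≤ μ * ‖x - xT‖ + (S.card : ℝ) * (μ * (2 * ε)) := add_le_add (hlip i x xT) hgiT
      _ ≤ μ * ‖x - xstar‖ + 2 * n * μ * ε := by
          nlinarith [mul_le_mul_of_nonneg_left hxxT hμ0, mul_nonneg hμ0 hε0,
            mul_le_mul_of_nonneg_left hr1' (mul_nonneg hμ0 hε0)]
  -- bound the sum over the complement
  have hcompl : ‖∑ j ∈ Sᶜ, gradient (Q j) x‖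
      ≤ (r:ℝ) * (μ * ‖x - xstar‖ + 2 * n * μ * ε) := by
    have hcc : ((Sᶜ).card : ℝ) = r := by
      have h : (Sᶜ).card = r := by rw [Finset.card_compl, Fintype.card_fin]; omega
      exact_mod_cast h
    calc ‖∑ j ∈ Sᶜ, gradient (Q j) x‖
        ≤ ∑ j ∈ Sᶜ, ‖gradient (Q j) x‖ := norm_sum_le _ _
      _ ≤ ∑ _j ∈ Sᶜ, (μ * ‖x - xstar‖ + 2 * n * μ * ε) := Finset.sum_le_sum hbound
      _ = ((Sᶜ).card : ℝ) * (μ * ‖x - xstar‖ + 2 * n * μ * ε) := by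
          rw [Finset.sum_const, nsmul_eq_mul]
      _ = (r:ℝ) * (μ * ‖x - xstar‖ + 2 * n * μ * ε) := by rw [hcc]
  have hsplit : ⟪x - xstar, ∑ j ∈ S, gradient (Q j) x⟫
      = ⟪x - xstar, ∑ i, gradient (Q i) x⟫
        - ⟪x - xstar, ∑ j ∈ Sᶜ, gradient (Q j) x⟫ := by
    rw [← Finset.sum_add_sum_compl S (fun j => gradient (Q j) x), inner_add_right]
    ring
  have hT2 : ⟪x - xstar, ∑ j ∈ Sᶜ, gradient (Q j) x⟫
      ≤ ‖x - xstar‖ * ((r:ℝ) * (μ * ‖x - xstar‖ + 2 * n * μ * ε)) :=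
    le_trans (real_inner_le_norm _ _)
      (mul_le_mul_of_nonneg_left hcompl (norm_nonneg _))
  have e1 : α * n * γ = n * γ - r * μ := by
    rw [hα]; field_simp
  have e3 : α * n * γ * (2 * r * μ * ε / (α * γ)) = n * (2 * r * μ * ε) := by
    field_simp
  have hexp : ‖x - xstar‖ * ((r:ℝ) * (μ * ‖x - xstar‖ + 2 * n * μ * ε))
      = r * μ * ‖x - xstar‖ ^ 2 + n * (2 * r * μ * ε) * ‖x - xstar‖ := by ring
  calc α * n * γ * ‖x - xstar‖ * (‖x - xstar‖ - 2 * r * μ * ε / (α * γ))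
      = (α * n * γ) * ‖x - xstar‖ ^ 2
        - (α * n * γ * (2 * r * μ * ε / (α * γ))) * ‖x - xstar‖ := by ring
    _ = (n * γ - r * μ) * ‖x - xstar‖ ^ 2 - (n * (2 * r * μ * ε)) * ‖x - xstar‖ := by
        rw [e3, e1]
    _ ≤ ⟪x - xstar, ∑ j ∈ S, gradient (Q j) x⟫ := by
        rw [hsplit]
        nlinarith [hT1, hT2, hexp]
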